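/- Let X be a Banach space and κ an infinite cardinal. Then X has the κ-Daugavet property if and only if for every family {y_α : α < κ} ⊆ S_X, every ε > 0, and every finite convex combination C = Σ_{i=1}^n λ_i S_i of slices S_i of B_X (λ_i ≥ 0, Σλ_i = 1), there exists x ∈ C with ‖y_α + x‖ > 2 − ε for all α < κ. -/
import Mathlib


universe u

open Finset in
/-- A slice of the closed unit ball of `X`. -/
def ballSlice {X : Type u} [NormedAddCommGroup X] [NormedSpace ℝ X]
    (f : X →L[ℝ] ℝ) (a : ℝ) : Set X :=
  {x | ‖x‖ ≤ 1 ∧ ‖f‖ - a < f x}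

/-- `X` has the `κ`-Daugavet property. -/
def HasKDaugavet (X : Type u) [NormedAddCommGroup X] [NormedSpace ℝ X]
    (κ : Cardinal.{u}) : Prop :=
  ∀ Y : Set X, Cardinal.mk Y ≤ κ → (∀ y ∈ Y, ‖y‖ = 1) →
    ∀ (f : X →L[ℝ] ℝ) (a : ℝ), 0 < a → ∀ ε : ℝ, 0 < ε →
      ∃ x ∈ ballSlice f a, ∀ y ∈ Y, 2 - ε < ‖y + x‖

set_option maxHeartbeats 1000000

/-- Transfinite Shvidkoy lemma: the `κ`-Daugavet property is equivalent to the analogous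
statement with slices replaced by finite convex combinations of slices. -/
theorem kDaugavet_iff_convex_combinations (X : Type u) [NormedAddCommGroup X]
    [NormedSpace ℝ X] [CompleteSpace X] (κ : Cardinal.{u}) (hκ : Cardinal.aleph0 ≤ κ) :
    HasKDaugavet X κ ↔
      ∀ Y : Set X, Cardinal.mk Y ≤ κ → (∀ y ∈ Y, ‖y‖ = 1) →
        ∀ ε : ℝ, 0 < ε → ∀ n : ℕ, 0 < n →
          ∀ (lam : Fin n → ℝ) (f : Fin n → X →L[ℝ] ℝ) (a : Fin n → ℝ),
            (∀ i, 0 ≤ lam i) → (∑ i, lam i) = 1 → (∀ i, 0 < a i) →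
            ∃ x : Fin n → X, (∀ i, x i ∈ ballSlice (f i) (a i)) ∧
              ∀ y ∈ Y, 2 - ε < ‖y + ∑ i, lam i • x i‖ := by
  constructor
  · intro hD Y hY hYnorm ε hε n hn lam f a hlam hsum ha
    -- reduce to ε ≤ 1
    set ε' : ℝ := min ε 1 with hε'def
    have hε'0 : 0 < ε' := lt_min hε one_pos
    have hε'1 : ε' ≤ 1 := min_le_right _ _
    have hε'ε : ε' ≤ ε := min_le_left _ _
    set δ : ℝ := ε' / 3 ^ n with hδdef
    have h3n : (0:ℝ) < 3 ^ n := by positivity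
    have hδ0 : 0 < δ := div_pos hε'0 h3n
    have hδn : 3 ^ n * δ ≤ 1 := by
      rw [hδdef, mul_div_cancel₀ _ h3n.ne']
      exact hε'1
    have hlam1 : ∀ i, lam i ≤ 1 := by
      intro i
      calc lam i ≤ ∑ j, lam j :=
            Finset.single_le_sum (fun j _ => hlam j) (Finset.mem_univ i)
        _ = 1 := hsum
    have main : ∀ k, k ≤ n → ∃ x : Fin n → X,
        (∀ i : Fin n, (i : ℕ) < k → x i ∈ ballSlice (f i) (a i)) ∧
        ∀ y ∈ Y, 1 + (∑ i ∈ Finset.univ.filter (fun i : Fin n => (i:ℕ) < k), lam i)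
            - ((3:ℝ) ^ k - 1) * δ
          ≤ ‖y + ∑ i ∈ Finset.univ.filter (fun i : Fin n => (i:ℕ) < k), lam i • x i‖ := by
      intro k
      induction k with
      | zero =>
        intro _
        refine ⟨fun _ => 0, fun i hi => absurd hi (Nat.not_lt_zero _), ?_⟩
        intro y hy
        have hfilt : Finset.univ.filter (fun i : Fin n => (i:ℕ) < 0) = ∅ := by
          apply Finset.filter_false_of_mem; intro i _; omega
        simp [hfilt, hYnorm y hy]
      | succ k ih =>
        intro hk1
        have hk : k < n := hk1
        obtain ⟨x, hxs, hxb⟩ := ih (le_of_lt hk)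
        set s : ℝ := ∑ i ∈ Finset.univ.filter (fun i : Fin n => (i:ℕ) < k), lam i with hs
        set w : X := ∑ i ∈ Finset.univ.filter (fun i : Fin n => (i:ℕ) < k), lam i • x i with hw
        set η : ℝ := ((3:ℝ)^k - 1) * δ with hη
        have h3k1 : (1:ℝ) ≤ 3 ^ k := one_le_pow₀ (by norm_num : (1:ℝ) ≤ 3)
        have hη0 : 0 ≤ η := mul_nonneg (by linarith) hδ0.le
        have hη1 : η < 1 := by
          have h1 : (3:ℝ)^k ≤ 3^n := by
            apply pow_le_pow_right₀ (by norm_num : (1:ℝ) ≤ 3) hk.le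
          have h2 : η < 3^n * δ := by
            apply mul_lt_mul_of_pos_right (by linarith) hδ0
          linarith
        have hs0 : 0 ≤ s := Finset.sum_nonneg fun i _ => hlam i
        have hs1 : s ≤ 1 := by
          rw [hs, ← hsum]
          exact Finset.sum_le_sum_of_subset_of_nonneg (Finset.filter_subset _ _)
            (fun i _ _ => hlam i)
        have hwn : ‖w‖ ≤ s := by
          rw [hw, hs]
          refine le_trans (norm_sum_le _ _) (Finset.sum_le_sum ?_)
          intro i hi
          have hxi : ‖x i‖ ≤ 1 := (hxs i (by simpa using (Finset.mem_filter.1 hi).2)).1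
          rw [norm_smul, Real.norm_eq_abs, abs_of_nonneg (hlam i)]
          nlinarith [hlam i]
        have hm : ∀ y ∈ Y, 1 + s - η ≤ ‖y + w‖ ∧ ‖y + w‖ ≤ 1 + s := by
          intro y hy
          refine ⟨hxb y hy, ?_⟩
          calc ‖y + w‖ ≤ ‖y‖ + ‖w‖ := norm_add_le _ _
            _ ≤ 1 + s := by rw [hYnorm y hy]; linarith
        set U : Set X := (fun y : X => ‖y + w‖⁻¹ • (y + w)) '' Y with hU
        have hUnorm : ∀ u ∈ U, ‖u‖ = 1 := by
          rintro u ⟨y, hy, rfl⟩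
          have hv := (hm y hy).1
          have hvpos : 0 < ‖y + w‖ := by linarith
          rw [norm_smul, norm_inv, norm_norm, inv_mul_cancel₀ hvpos.ne']
        have hcard : Cardinal.mk U ≤ κ := le_trans Cardinal.mk_image_le hY
        obtain ⟨xnew, hxnewS, hxnew⟩ := hD U hcard hUnorm (f ⟨k, hk⟩) (a ⟨k, hk⟩)
          (ha _) δ hδ0
        refine ⟨Function.update x ⟨k, hk⟩ xnew, ?_, ?_⟩
        · intro i hi
          rcases eq_or_ne i ⟨k, hk⟩ with rfl | hne
          · simpa [Function.update_self] using hxnewS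
          · rw [Function.update_of_ne hne]
            apply hxs
            have : (i:ℕ) ≠ k := fun h => hne (Fin.ext h)
            omega
        · intro y hy
          have hkmem : (⟨k,hk⟩ : Fin n) ∉
              Finset.univ.filter (fun i : Fin n => (i:ℕ) < k) := by simp
          have hfilt : Finset.univ.filter (fun i : Fin n => (i:ℕ) < k+1)
              = insert (⟨k,hk⟩ : Fin n)
                  (Finset.univ.filter (fun i : Fin n => (i:ℕ) < k)) := by
            ext i
            simp only [Finset.mem_filter, Finset.mem_univ, true_and, Finset.mem_insert,
              Fin.ext_iff]
            omega
          set lk : ℝ := lam ⟨k,hk⟩ with hlk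
          have hsum' : ∑ i ∈ Finset.univ.filter (fun i : Fin n => (i:ℕ) < k+1),
              lam i • (Function.update x ⟨k, hk⟩ xnew) i = lk • xnew + w := by
            rw [hfilt, Finset.sum_insert hkmem, Function.update_self]
            congr 1
            rw [hw]
            apply Finset.sum_congr rfl
            intro i hi
            have hne : i ≠ ⟨k, hk⟩ := by
              have := (Finset.mem_filter.1 hi).2
              intro h; rw [h] at this; simp at this
            rw [Function.update_of_ne hne]
          have hssum : ∑ i ∈ Finset.univ.filter (fun i : Fin n => (i:ℕ) < k+1), lam i
              = lk + s := by
            rw [hfilt, Finset.sum_insert hkmem, hs]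
          rw [hsum', hssum]
          have hvd : y + (lk • xnew + w) = (y + w) + lk • xnew := by module
          rw [hvd]
          set v : X := y + w with hv
          set m : ℝ := ‖v‖ with hmm
          have hm1 : 1 + s - η ≤ m := (hm y hy).1
          have hm2 : m ≤ 1 + s := (hm y hy).2
          have hmpos : 0 < m := by linarith
          have hxnn : ‖xnew‖ ≤ 1 := hxnewS.1
          have hlk0 : 0 ≤ lk := hlam ⟨k,hk⟩
          have hlk1 : lk ≤ 1 := hlam1 ⟨k,hk⟩
          have hu : 2 - δ < ‖m⁻¹ • v + xnew‖ := hxnew _ ⟨y, hy, rfl⟩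
          have e1 : m⁻¹ • v + xnew = (m⁻¹ • v + lk • xnew) + (1 - lk) • xnew := by module
          have h1 : ‖m⁻¹ • v + xnew‖ ≤ ‖m⁻¹ • v + lk • xnew‖ + (1 - lk) := by
            rw [e1]
            refine le_trans (norm_add_le _ _) ?_
            have h2 : ‖(1-lk) • xnew‖ ≤ 1 - lk := by
              rw [norm_smul, Real.norm_eq_abs, abs_of_nonneg (by linarith)]
              nlinarith
            linarith
          have e2 : v + (lk * m) • xnew = m • (m⁻¹ • v + lk • xnew) := by
            rw [smul_add, smul_smul, mul_inv_cancel₀ hmpos.ne', one_smul, smul_smul,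
              mul_comm]
          have h2 : ‖v + (lk * m) • xnew‖ = m * ‖m⁻¹ • v + lk • xnew‖ := by
            rw [e2, norm_smul, Real.norm_eq_abs, abs_of_pos hmpos]
          have e3 : v + (lk*m) • xnew = (v + lk • xnew) + (lk*m - lk) • xnew := by module
          have h3 : ‖v + (lk*m) • xnew‖ ≤ ‖v + lk • xnew‖ + |lk*m - lk| := by
            rw [e3]
            refine le_trans (norm_add_le _ _) ?_
            have h4 : ‖(lk*m - lk) • xnew‖ ≤ |lk*m - lk| := by
              rw [norm_smul, Real.norm_eq_abs]
              exact mul_le_of_le_one_right (abs_nonneg _) hxnn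
            linarith
          have hC : 1 + lk - δ < ‖m⁻¹ • v + lk • xnew‖ := by linarith
          have hmc : m * (1 + lk - δ) < m * ‖m⁻¹ • v + lk • xnew‖ :=
            mul_lt_mul_of_pos_left hC hmpos
          have hη' : ((3:ℝ)^(k+1) - 1) * δ = 3*η + 2*δ := by
            rw [hη, pow_succ]; ring
          rw [hη']
          rcases le_or_gt 1 m with hcase | hcase
          · have habs : |lk*m - lk| = lk*(m-1) := by
              rw [abs_of_nonneg (by nlinarith)]; ring
            rw [habs] at h3
            nlinarith [mul_nonneg hδ0.le (show (0:ℝ) ≤ 2 - m by linarith)]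
          · have habs : |lk*m - lk| = lk*(1-m) := by
              rw [abs_of_nonpos (by nlinarith)]; ring
            rw [habs] at h3
            nlinarith [mul_nonneg (show (0:ℝ) ≤ 1 - lk by linarith)
                (show (0:ℝ) ≤ 1 - m by linarith),
              mul_nonneg hδ0.le (show (0:ℝ) ≤ 1 - m by linarith),
              mul_nonneg hlk0 (show (0:ℝ) ≤ 1 - m by linarith)]
    obtain ⟨x, hxs, hxb⟩ := main n le_rfl
    have huniv : Finset.univ.filter (fun i : Fin n => (i:ℕ) < n) = Finset.univ := by
      apply Finset.filter_true_of_mem; intro i _; exact i.isLt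
    refine ⟨x, fun i => hxs i i.isLt, ?_⟩
    intro y hy
    have hb := hxb y hy
    rw [huniv, hsum] at hb
    have : (3:ℝ)^n * δ = ε' := by rw [hδdef, mul_div_cancel₀ _ h3n.ne']
    have hlt : ((3:ℝ)^n - 1) * δ < ε := by nlinarith
    linarith
  · intro h Y hY hYnorm f a ha ε hε
    obtain ⟨x, hx1, hx2⟩ := h Y hY hYnorm ε hε 1 one_pos (fun _ => 1) (fun _ => f)
      (fun _ => a) (fun _ => zero_le_one) (by simp) (fun _ => ha)
    refine ⟨x 0, hx1 0, ?_⟩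
    intro y hy
    have := hx2 y hy
    simpa using this
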